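/- Suppose a quadratic form on ℝ^N is given by a diagonal matrix with eigenvalues λ₁ < 0 < λ₂ ≤ ⋯ ≤ λ_N. Then the form is nonnegative on the hyperplane orthogonal to the vector (x₁, …, x_N) (with all x_i ≠ 0) if and only if ∑_{i=1}^N x_i²/λ_i ≤ 0. -/

import Mathlib

theorem quadratic_form_nonneg_on_hyperplane_iff (N : ℕ) (hN : 2 ≤ N)
    (lam x : Fin N → ℝ) (hmono : Monotone lam)
    (hNpos : 0 < N)
    (hneg : lam ⟨0, hNpos⟩ < 0) (hpos : ∀ i : Fin N, i ≠ ⟨0, hNpos⟩ → 0 < lam i)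
    (hx : ∀ i, x i ≠ 0) :
    (∀ d : Fin N → ℝ, ∑ i, x i * d i = 0 → 0 ≤ ∑ i, lam i * d i ^ 2) ↔
      ∑ i, x i ^ 2 / lam i ≤ 0 := by
  set i0 : Fin N := ⟨0, hNpos⟩ with hi0def
  set s : Finset (Fin N) := Finset.univ.erase i0 with hsdef
  have hi0mem : i0 ∈ (Finset.univ : Finset (Fin N)) := Finset.mem_univ _
  have hmem : ∀ i ∈ s, i ≠ i0 := fun i hi => Finset.ne_of_mem_erase hi
  set S : ℝ := ∑ i ∈ s, x i ^ 2 / lam i with hSdef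
  have hl0 : lam i0 ≠ 0 := ne_of_lt hneg
  have hx0 : x i0 ≠ 0 := hx i0
  have hsne : s.Nonempty := by
    refine ⟨⟨1, lt_of_lt_of_le one_lt_two hN⟩, Finset.mem_erase.2 ⟨?_, Finset.mem_univ _⟩⟩
    simp [hi0def, Fin.ext_iff]
  have hSpos : 0 < S := by
    refine Finset.sum_pos (fun i hi => ?_) hsne
    exact div_pos (pow_two_pos_of_ne_zero (hx i)) (hpos i (hmem i hi))
  have hsplit : ∑ i, x i ^ 2 / lam i = x i0 ^ 2 / lam i0 + S := by
    rw [hSdef]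
    exact (Finset.add_sum_erase _ (fun i => x i ^ 2 / lam i) hi0mem).symm
  constructor
  · intro H
    by_contra hc
    push_neg at hc
    rw [hsplit] at hc
    -- construct the bad direction
    set d : Fin N → ℝ := fun i => if i = i0 then -S / x i0 else x i / lam i with hddef
    have hd0 : d i0 = -S / x i0 := by simp [hddef]
    have hdi : ∀ i ∈ s, d i = x i / lam i := fun i hi => by simp [hddef, hmem i hi]
    have hdsum : ∑ i, x i * d i = 0 := by
      rw [← Finset.add_sum_erase _ _ hi0mem, hd0]
      have : ∑ i ∈ s, x i * d i = S := by
        rw [hSdef]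
        refine Finset.sum_congr rfl fun i hi => ?_
        rw [hdi i hi]; ring
      rw [this]
      field_simp
      ring
    have hq := H d hdsum
    rw [← Finset.add_sum_erase _ _ hi0mem, hd0] at hq
    have hTs : ∑ i ∈ s, lam i * d i ^ 2 = S := by
      rw [hSdef]
      refine Finset.sum_congr rfl fun i hi => ?_
      rw [hdi i hi]
      have := (hpos i (hmem i hi)).ne'
      field_simp
    rw [hTs] at hq
    -- derive contradiction
    have key : x i0 ^ 2 + S * lam i0 < 0 := by
      have h1 : x i0 ^ 2 / lam i0 * lam i0 = x i0 ^ 2 := div_mul_cancel₀ _ hl0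
      nlinarith [mul_pos hc (neg_pos.2 hneg)]
    have e : lam i0 * (-S / x i0) ^ 2 * x i0 ^ 2 = lam i0 * S ^ 2 := by
      field_simp
    nlinarith [mul_nonneg hq (sq_nonneg (x i0)), mul_pos hSpos (neg_pos.2 key), sq_nonneg (x i0)]
  · intro hcond d hd
    rw [hsplit] at hcond
    rw [← Finset.add_sum_erase _ _ hi0mem] at hd ⊢
    set T : ℝ := ∑ i ∈ s, lam i * d i ^ 2 with hTdef
    have hT0 : 0 ≤ T := Finset.sum_nonneg fun i hi =>
      mul_nonneg (hpos i (hmem i hi)).le (sq_nonneg _)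
    have hcs : (∑ i ∈ s, x i * d i) ^ 2 ≤ S * T := by
      have h := Finset.sum_mul_sq_le_sq_mul_sq s
        (fun i => x i / Real.sqrt (lam i)) (fun i => Real.sqrt (lam i) * d i)
      have e1 : ∑ i ∈ s, (x i / Real.sqrt (lam i)) * (Real.sqrt (lam i) * d i)
          = ∑ i ∈ s, x i * d i := by
        refine Finset.sum_congr rfl fun i hi => ?_
        have hs' : Real.sqrt (lam i) ≠ 0 := (Real.sqrt_pos.2 (hpos i (hmem i hi))).ne'
        field_simp
      have e2 : ∑ i ∈ s, (x i / Real.sqrt (lam i)) ^ 2 = S := by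
        rw [hSdef]
        refine Finset.sum_congr rfl fun i hi => ?_
        rw [div_pow, Real.sq_sqrt (hpos i (hmem i hi)).le]
      have e3 : ∑ i ∈ s, (Real.sqrt (lam i) * d i) ^ 2 = T := by
        rw [hTdef]
        refine Finset.sum_congr rfl fun i hi => ?_
        rw [mul_pow, Real.sq_sqrt (hpos i (hmem i hi)).le]
      rw [e1, e2, e3] at h
      exact h
    have hsum : ∑ i ∈ s, x i * d i = -(x i0 * d i0) := by linarith
    rw [hsum] at hcs
    have key : 0 ≤ x i0 ^ 2 + S * lam i0 := by
      have h1 : x i0 ^ 2 / lam i0 * lam i0 = x i0 ^ 2 := div_mul_cancel₀ _ hl0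
      nlinarith [mul_nonneg (neg_nonneg.2 hcond) (neg_nonneg.2 hneg.le)]
    nlinarith [mul_nonneg (sq_nonneg (d i0)) key, hcs, hSpos, hT0]
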